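/- (Lower bound from finite Fisher information.) Suppose λ := Φ*(X⊔Y : (B_ℓ,B_r)) < ∞ and the Stam inequality gives Φ*(X+√tS ⊔ Y+√tT) ≤ (n+m)/((n+m)/λ + t) for all t > 0. Then χ*(X⊔Y : (B_ℓ,B_r)) ≥ ((n+m)/2)·log(2π(n+m)e/λ) > −∞. Abstractly: if h(t) ≤ (n+m)/(a+t) with a = (n+m)/λ > 0, then ((n+m)/2)log(2πe) + (1/2)∫₀^∞[(n+m)/(1+t)−h(t)]dt ≥ ((n+m)/2)log(2πe) + ((n+m)/2)log a. -/

import Mathlib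

open MeasureTheory Set Real

open Filter Topology in
lemma aux_key (a : ℝ) (ha : 0 < a) :
    IntegrableOn (fun t : ℝ => 1/(1+t) - 1/(a+t)) (Ioi 0) ∧
    ∫ t in Ioi (0:ℝ), (1/(1+t) - 1/(a+t)) = Real.log a := by
  set f : ℝ → ℝ := fun t => Real.log (1+t) - Real.log (a+t) with hf
  have hderiv : ∀ x ∈ Ici (0:ℝ), HasDerivAt f (1/(1+x) - 1/(a+x)) x := by
    intro x hx
    have hx0 : (0:ℝ) ≤ x := hx
    have h1 : HasDerivAt (fun t : ℝ => 1+t) 1 x := (hasDerivAt_id x).const_add 1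
    have h2 : HasDerivAt (fun t : ℝ => a+t) 1 x := (hasDerivAt_id x).const_add a
    have l1 := h1.log (by positivity)
    have l2 := h2.log (by positivity)
    exact l1.sub l2
  have htend : Tendsto f atTop (𝓝 0) := by
    have hrat : Tendsto (fun t : ℝ => (1+t)/(a+t)) atTop (𝓝 1) := by
      have h0 : Tendsto (fun t : ℝ => (1-a)/(a+t)) atTop (𝓝 0) :=
        Tendsto.div_atTop tendsto_const_nhds (tendsto_atTop_add_const_left _ a tendsto_id)
      have h1 : Tendsto (fun t : ℝ => 1 + (1-a)/(a+t)) atTop (𝓝 1) := by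
        simpa using tendsto_const_nhds.add h0
      refine h1.congr' ?_
      filter_upwards [eventually_gt_atTop (0:ℝ)] with t ht
      have : a + t ≠ 0 := by positivity
      field_simp
      ring
    have := (Real.continuousAt_log one_ne_zero).tendsto.comp hrat
    rw [Real.log_one] at this
    refine this.congr' ?_
    filter_upwards [eventually_gt_atTop (0:ℝ)] with t ht
    simp only [Function.comp]
    rw [Real.log_div (by positivity) (by positivity)]
  have hintg : IntegrableOn (fun t : ℝ => 1/(1+t) - 1/(a+t)) (Ioi 0) := by
    rcases le_total 1 a with hc | hc
    · refine integrableOn_Ioi_deriv_of_nonneg' hderiv (fun x hx => ?_) htend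
      have hx0 : (0:ℝ) < x := hx
      have : 1/(a+x) ≤ 1/(1+x) :=
        one_div_le_one_div_of_le (by linarith) (by linarith)
      linarith
    · have : IntegrableOn (fun t : ℝ => -(1/(1+t) - 1/(a+t))) (Ioi 0) := by
        refine integrableOn_Ioi_deriv_of_nonneg'
          (g := fun t => -f t) (fun x hx => (hderiv x hx).neg) (fun x hx => ?_)
          (by simpa using htend.neg)
        have hx0 : (0:ℝ) < x := hx
        have : 1/(1+x) ≤ 1/(a+x) :=
          one_div_le_one_div_of_le (by linarith) (by linarith)
        linarith
      have h2 := this.neg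
      simpa only [Pi.neg_def, neg_neg] using h2
  refine ⟨hintg, ?_⟩
  have := integral_Ioi_of_hasDerivAt_of_tendsto'
    (f := f) (f' := fun t => 1/(1+t) - 1/(a+t)) hderiv hintg htend
  rw [this]
  simp [hf]

/-- Lower bound for the non-microstate bi-free entropy from finite bi-free Fisher
information.  If `λ = Φ*(X⊔Y : (B_ℓ,B_r)) < ∞`, the bi-free Stam inequality
gives `h(t) = Φ*(X+√tS ⊔ Y+√tT) ≤ (n+m)/((n+m)/λ + t)` for all `t > 0`, and then
`χ*(X⊔Y : (B_ℓ,B_r)) = ((n+m)/2)log(2πe) + (1/2)∫₀^∞[(n+m)/(1+t) − h(t)]dt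
  ≥ ((n+m)/2)·log(2π(n+m)e/λ) > −∞`. -/
theorem stmt13 (n m : ℕ) (hnm : 0 < n + m) (lam : ℝ) (hlam : 0 < lam) (h : ℝ → ℝ)
    (hnn : ∀ t > (0:ℝ), 0 ≤ h t)
    (hup : ∀ t > (0:ℝ), h t ≤ (n+m : ℝ) / ((n+m : ℝ)/lam + t))
    (hint : IntegrableOn (fun t => (n+m : ℝ)/(1+t) - h t) (Ioi 0)) :
    (n+m : ℝ)/2 * Real.log (2 * π * (n+m) * Real.exp 1 / lam)
      ≤ (n+m : ℝ)/2 * Real.log (2 * π * Real.exp 1)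
        + (1/2) * ∫ t in Ioi (0:ℝ), ((n+m : ℝ)/(1+t) - h t) := by
  set N : ℝ := (n+m : ℝ) with hN
  have hN0 : (0:ℝ) < N := by rw [hN]; exact_mod_cast hnm
  set a : ℝ := N / lam with haa
  have ha : 0 < a := div_pos hN0 hlam
  obtain ⟨hintg, hval⟩ := aux_key a ha
  -- integral comparison
  have hmono : N * Real.log a ≤ ∫ t in Ioi (0:ℝ), (N/(1+t) - h t) := by
    have h1 : ∫ t in Ioi (0:ℝ), N * (1/(1+t) - 1/(a+t))
        ≤ ∫ t in Ioi (0:ℝ), (N/(1+t) - h t) := by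
      refine setIntegral_mono_on (hintg.const_mul N) hint measurableSet_Ioi ?_
      intro t ht
      have ht0 : (0:ℝ) < t := ht
      have hu := hup t ht0
      have e1 : N * (1/(1+t)) = N/(1+t) := by ring
      have e2 : N * (1/(a+t)) = N/(a+t) := by ring
      have : h t ≤ N/(a+t) := hu
      nlinarith [this]
    calc N * Real.log a = ∫ t in Ioi (0:ℝ), N * (1/(1+t) - 1/(a+t)) := by
          rw [MeasureTheory.integral_const_mul, hval]
      _ ≤ _ := h1
  -- log arithmetic
  have hlog : Real.log (2 * π * N * Real.exp 1 / lam)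
      = Real.log (2 * π * Real.exp 1) + Real.log a := by
    have e : 2 * π * N * Real.exp 1 / lam = (2 * π * Real.exp 1) * a := by
      rw [haa]; ring
    rw [e, Real.log_mul (by positivity) (ne_of_gt ha)]
  rw [hlog]
  have : N/2 * Real.log a ≤ (1/2) * ∫ t in Ioi (0:ℝ), (N/(1+t) - h t) := by linarith
  linarith
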